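/- Under the factorization Z = [U_{i−1} u p] with U_{i−1}^H S u = 0 and u^H S u = 1, the projected pencil (Z^H H Z, Z^H S Z) is congruent via a unit lower triangular matrix L to the block-diagonal pair (diag(Λ_{i−1}, H_⊥), diag(I_{i−1}, S_⊥)), where H_⊥ = Z_⊥^H H Z_⊥, S_⊥ = Z_⊥^H S Z_⊥, Z_⊥ = [u p_⊥], and p_⊥ = U_{i−1}^c (U_{i−1}^c)^H S p. Consequently det(Z^H H Z − μ Z^H S Z) = det(Λ_{i−1} − μI)·det(H_⊥ − μS_⊥) for all μ. -/

import Mathlib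

open Matrix
open scoped ComplexOrder

private lemma aux_entry {n p : ℕ} (A : Matrix (Fin n) (Fin p) ℂ) (M : Matrix (Fin n) (Fin n) ℂ)
    (B : Matrix (Fin n) (Fin p) ℂ) (i j : Fin p) :
    (Aᴴ * M * B) i j = star (fun k => A k i) ⬝ᵥ (M *ᵥ (fun k => B k j)) := by
  simp only [Matrix.mul_apply, conjTranspose_apply, mulVec, dotProduct, Pi.star_apply,
    Finset.sum_mul, Finset.mul_sum]
  rw [Finset.sum_comm]
  apply Finset.sum_congr rfl; intro k _
  apply Finset.sum_congr rfl; intro l _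
  ring

private lemma aux_herm_dot {n : ℕ} {M : Matrix (Fin n) (Fin n) ℂ} (hM : Mᴴ = M)
    (x y : Fin n → ℂ) :
    star x ⬝ᵥ (M *ᵥ y) = star (star y ⬝ᵥ (M *ᵥ x)) := by
  simp only [dotProduct, mulVec, Pi.star_apply, Finset.mul_sum, star_sum, star_mul',
    star_star]
  rw [Finset.sum_comm]
  apply Finset.sum_congr rfl; intro k _
  apply Finset.sum_congr rfl; intro l _
  rw [show star (M k l) = (starRingEnd ℂ) (M k l) from rfl,
    show (starRingEnd ℂ) (M k l) = M l k from by
      simpa [Matrix.conjTranspose_apply] using congrFun (congrFun hM l) k]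
  ring

private lemma aux_dot_row {n : ℕ} (U : Matrix (Fin n) (Fin n) ℂ) (w : Fin n → ℂ) (i : Fin n) :
    star (fun k => U k i) ⬝ᵥ w = (Uᴴ *ᵥ w) i := by
  simp [dotProduct, mulVec, conjTranspose_apply]

private lemma aux_sum_lt {N M : ℕ} (h : M ≤ N) (g : Fin N → ℂ) :
    ∑ l : Fin N, (if (l : ℕ) < M then g l else 0) =
      ∑ j : Fin M, g (Fin.castLE h j) := by
  set G : ℕ → ℂ := fun x => if h' : x < N then g ⟨x, h'⟩ else 0 with hG
  calc ∑ l : Fin N, (if (l : ℕ) < M then g l else 0)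
      = ∑ l : Fin N, (fun x => if x < M then G x else 0) (l : ℕ) := by
        apply Finset.sum_congr rfl; intro l _
        by_cases hl : (l : ℕ) < M <;> simp [hG, hl, l.isLt]
    _ = ∑ x ∈ Finset.range N, (if x < M then G x else 0) :=
        by rw [Fin.sum_univ_eq_sum_range (fun x => if x < M then G x else 0)]
    _ = ∑ x ∈ Finset.range M, (if x < M then G x else 0) := by
        symm
        apply Finset.sum_subset
        · intro x hx; simp at hx ⊢; omega
        · intro x _ hxm; simp at hxm ⊢; intro hxM; omega
    _ = ∑ x ∈ Finset.range M, G x := by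
        apply Finset.sum_congr rfl; intro x hx
        simp at hx; simp [hx]
    _ = ∑ j : Fin M, G (j : ℕ) := (Fin.sum_univ_eq_sum_range _ M).symm
    _ = ∑ j : Fin M, g (Fin.castLE h j) := by
        apply Finset.sum_congr rfl; intro j _
        have : ((j : ℕ) : ℕ) < N := lt_of_lt_of_le j.isLt h
        simp [hG, this]
        rfl

/-- Block factorization of the projected pencil: with `Z = [U_{i−1} u p]`,
`U_{i−1}ᴴ S u = 0`, `uᴴ S u = 1`, the pair `(Zᴴ H Z, Zᴴ S Z)` is congruent via a unit lower
triangular `L` to `(diag(Λ_{i−1}, H⊥), diag(I, S⊥))` where `H⊥ = Z⊥ᴴ H Z⊥`,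
`S⊥ = Z⊥ᴴ S Z⊥`, `Z⊥ = [u p⊥]`, `p⊥ = U_{i−1}ᶜ (U_{i−1}ᶜ)ᴴ S p`. Consequently
`det(Zᴴ H Z − μ Zᴴ S Z) = det(Λ_{i−1} − μI) · det(H⊥ − μ S⊥)` for all `μ`. -/
theorem stmt7 {n m : ℕ} (hm : m ≤ n)
    (H S U Λ : Matrix (Fin n) (Fin n) ℂ) (lam : Fin n → ℝ)
    (hH : H.IsHermitian) (hS : S.PosDef)
    (hΛ : Λ = Matrix.diagonal fun k => (lam k : ℂ))
    (hortho : Uᴴ * S * U = 1)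
    (heig : H * U = S * U * Λ)
    (u p : Fin n → ℂ)
    (huorth : ∀ k : Fin n, (k : ℕ) < m → (Uᴴ *ᵥ (S *ᵥ u)) k = 0)
    (hunorm : star u ⬝ᵥ (S *ᵥ u) = 1)
    (Z : Matrix (Fin n) (Fin (m + 2)) ℂ)
    (hZ : Z = fun (k : Fin n) (j : Fin (m + 2)) =>
      if h : (j : ℕ) < m then U k ⟨(j : ℕ), by omega⟩
      else if (j : ℕ) = m then u k else p k)
    (Λm : Matrix (Fin m) (Fin m) ℂ)
    (hΛm : Λm = Matrix.diagonal fun j : Fin m => (lam (Fin.castLE hm j) : ℂ))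
    (pperp : Fin n → ℂ)
    (hpperp : pperp = U *ᵥ fun k => if (k : ℕ) < m then 0 else (Uᴴ *ᵥ (S *ᵥ p)) k)
    (Zperp : Matrix (Fin n) (Fin 2) ℂ)
    (hZperp : Zperp = fun (k : Fin n) (j : Fin 2) => if (j : ℕ) = 0 then u k else pperp k)
    (Hperp Sperp : Matrix (Fin 2) (Fin 2) ℂ)
    (hHperp : Hperp = Zperpᴴ * H * Zperp)
    (hSperp : Sperp = Zperpᴴ * S * Zperp) :
    (∃ L : Matrix (Fin (m + 2)) (Fin (m + 2)) ℂ,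
      (∀ i j : Fin (m + 2), i < j → L i j = 0) ∧ (∀ i, L i i = 1) ∧
      L * (Zᴴ * H * Z) * Lᴴ =
        (Matrix.reindex finSumFinEquiv finSumFinEquiv)
          (Matrix.fromBlocks Λm 0 0 Hperp) ∧
      L * (Zᴴ * S * Z) * Lᴴ =
        (Matrix.reindex finSumFinEquiv finSumFinEquiv)
          (Matrix.fromBlocks (1 : Matrix (Fin m) (Fin m) ℂ) 0 0 Sperp)) ∧
    ∀ μ : ℂ, (Zᴴ * H * Z - μ • (Zᴴ * S * Z)).det =
      (Λm - μ • (1 : Matrix (Fin m) (Fin m) ℂ)).det * (Hperp - μ • Sperp).det := by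
  classical
  have hSsymm : Sᴴ = S := hS.isHermitian
  have hHsymm : Hᴴ = H := hH
  set c : Fin n → ℂ := Uᴴ *ᵥ (S *ᵥ p) with hc
  have hUinv : U * (Uᴴ * S) = 1 := by
    rw [mul_eq_one_comm]; exact hortho
  have hUH : Uᴴ * H = Λᴴ * (Uᴴ * S) := by
    have h1 := congrArg conjTranspose heig
    simp only [conjTranspose_mul, hHsymm, hSsymm] at h1
    rw [h1]
  have hUSU : ∀ v : Fin n → ℂ, Uᴴ *ᵥ (S *ᵥ (U *ᵥ v)) = v := by
    intro v
    rw [mulVec_mulVec, mulVec_mulVec, hortho, one_mulVec]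
  have hUHv : ∀ v : Fin n → ℂ, Uᴴ *ᵥ (H *ᵥ v) = Λᴴ *ᵥ (Uᴴ *ᵥ (S *ᵥ v)) := by
    intro v
    rw [mulVec_mulVec, hUH, mulVec_mulVec, mulVec_mulVec, Matrix.mul_assoc]
  have hpU : U *ᵥ c = p := by
    rw [hc, mulVec_mulVec, mulVec_mulVec, Matrix.mul_assoc, hUinv, one_mulVec]
  set col : Fin m → Fin n → ℂ := fun j k => U k (Fin.castLE hm j) with hcol
  have gS_col : ∀ j : Fin m, Uᴴ *ᵥ (S *ᵥ col j) = Pi.single (Fin.castLE hm j) (1 : ℂ) := by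
    intro j
    have hcolU : col j = U *ᵥ Pi.single (Fin.castLE hm j) (1 : ℂ) := by
      funext k; rw [mulVec_single]; simp [hcol]
    rw [hcolU, hUSU]
  have gS_pperp : Uᴴ *ᵥ (S *ᵥ pperp) = fun k : Fin n => if (k : ℕ) < m then 0 else c k := by
    rw [hpperp, hUSU]
  set Z' : Matrix (Fin n) (Fin (m + 2)) ℂ := fun k j =>
    if h : (j : ℕ) < m then U k ⟨(j : ℕ), lt_of_lt_of_le h hm⟩
    else if (j : ℕ) = m then u k else pperp k with hZ'
  set L : Matrix (Fin (m + 2)) (Fin (m + 2)) ℂ := fun i j =>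
    if i = j then 1
    else if h : (j : ℕ) < m then
      (if (i : ℕ) = m + 1 then -star (c ⟨(j : ℕ), lt_of_lt_of_le h hm⟩) else 0)
    else 0 with hL
  have hLlow : ∀ i j : Fin (m + 2), i < j → L i j = 0 := by
    intro i j hij
    have hne : i ≠ j := ne_of_lt hij
    have hij' : (i : ℕ) < (j : ℕ) := hij
    simp only [hL, hne, if_false]
    split
    · next h =>
        have : (i : ℕ) ≠ m + 1 := by omega
        simp [this]
    · rfl
  have hLdiag : ∀ i, L i i = 1 := by intro i; simp [hL]
  have hZL : Z * Lᴴ = Z' := by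
    ext k j
    rw [Matrix.mul_apply]
    by_cases hj : (j : ℕ) < m ∨ (j : ℕ) = m
    · -- in these columns L acts as identity
      have hjm : (j : ℕ) ≠ m + 1 := by omega
      have hLj : ∀ i, L j i = if i = j then 1 else 0 := by
        intro i
        by_cases hji : j = i
        · simp [hL, hji]
        · simp only [hL, hji, if_false]
          rw [if_neg (Ne.symm hji)]
          split
          · simp [hjm]
          · rfl
      have hsum : ∀ i, Z k i * Lᴴ i j = if i = j then Z k j else 0 := by
        intro i
        rw [Matrix.conjTranspose_apply, hLj i]
        by_cases hij : i = j <;> simp [hij]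
      rw [Finset.sum_congr rfl (fun i _ => hsum i), Finset.sum_ite_eq' Finset.univ j
        (fun _ => Z k j)]
      simp only [Finset.mem_univ, if_true]
      rcases hj with hj | hj
      · simp [hZ, hZ', hj]
      · have hj' : ¬ (j : ℕ) < m := by omega
        simp [hZ, hZ', hj', hj]
    · -- last column
      push_neg at hj
      obtain ⟨hj1, hj2⟩ := hj
      have hjm1 : (j : ℕ) = m + 1 := by omega
      have hLj : ∀ i : Fin (m + 2), Lᴴ i j =
          if i = j then 1 else if h : (i : ℕ) < m then -c ⟨(i : ℕ), lt_of_lt_of_le h hm⟩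
          else 0 := by
        intro i
        rw [Matrix.conjTranspose_apply]
        by_cases hji : i = j
        · simp [hL, hji]
        · simp only [hL, (Ne.symm hji : j ≠ i), if_false, hji]
          split
          · next h => simp [hjm1]
          · simp
      have hsum : ∀ i, Z k i * Lᴴ i j =
          (if i = j then Z k j else 0) +
          (if h : (i : ℕ) < m then -(U k ⟨(i : ℕ), lt_of_lt_of_le h hm⟩ *
            c ⟨(i : ℕ), lt_of_lt_of_le h hm⟩) else 0) := by
        intro i
        rw [hLj i]
        by_cases hij : i = j
        · subst hij
          have hni : ¬ (i : ℕ) < m := by omega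
          simp [hni]
        · simp only [hij, if_false, zero_add]
          split
          · next h =>
              rw [show Z k i = U k ⟨(i : ℕ), lt_of_lt_of_le h hm⟩ from by simp [hZ, h]]
              ring
          · simp
      rw [Finset.sum_congr rfl (fun i _ => hsum i), Finset.sum_add_distrib,
        Finset.sum_ite_eq' Finset.univ j (fun _ => Z k j)]
      simp only [Finset.mem_univ, if_true]
      have hZkj : Z k j = p k := by simp [hZ, hj1, hj2]
      have hZ'kj : Z' k j = pperp k := by simp [hZ', hj1, hj2]
      rw [hZkj, hZ'kj]
      set g : Fin (m + 2) → ℂ := fun i =>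
        if h : (i : ℕ) < m then -(U k ⟨(i : ℕ), lt_of_lt_of_le h hm⟩ *
          c ⟨(i : ℕ), lt_of_lt_of_le h hm⟩) else 0 with hg
      have hsum2 : ∑ i : Fin (m + 2), g i =
          ∑ j' : Fin m, -(U k (Fin.castLE hm j') * c (Fin.castLE hm j')) := by
        have h1 : ∀ i : Fin (m + 2), g i = if (i : ℕ) < m then g i else 0 := by
          intro i
          by_cases hi : (i : ℕ) < m <;> simp [hg, hi]
        rw [Finset.sum_congr rfl (fun i _ => h1 i),
          aux_sum_lt (by omega : m ≤ m + 2) g]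
        apply Finset.sum_congr rfl; intro j' _
        have hj'lt : ((Fin.castLE (by omega : m ≤ m + 2) j' : Fin (m + 2)) : ℕ) < m :=
          j'.isLt
        simp only [hg, hj'lt, dif_pos]
        rfl
      have hpperpk : pperp k =
          p k - ∑ j' : Fin m, U k (Fin.castLE hm j') * c (Fin.castLE hm j') := by
        rw [hpperp]
        have : (U *ᵥ fun l : Fin n => if (l : ℕ) < m then 0 else c l) k =
            ∑ l : Fin n, (U k l * c l - (if (l : ℕ) < m then U k l * c l else 0)) := by
          rw [mulVec]
          apply Finset.sum_congr rfl; intro l _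
          by_cases hl : (l : ℕ) < m <;> simp [dotProduct, hl]
        rw [this, Finset.sum_sub_distrib,
          aux_sum_lt hm (fun l => U k l * c l)]
        congr 1
        have := congrFun hpU k
        rw [← this, mulVec]
        rfl
      rw [hsum2, hpperpk, Finset.sum_neg_distrib]
      ring
  have key : ∀ M : Matrix (Fin n) (Fin n) ℂ,
      L * (Zᴴ * M * Z) * Lᴴ = Z'ᴴ * M * Z' := by
    intro M
    have h1 : L * (Zᴴ * M * Z) * Lᴴ = (Z * Lᴴ)ᴴ * M * (Z * Lᴴ) := by
      rw [Matrix.conjTranspose_mul, Matrix.conjTranspose_conjTranspose]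
      noncomm_ring [Matrix.mul_assoc]
    rw [h1, hZL]
  -- column identification
  have hZ'L : ∀ a : Fin m,
      (fun k => Z' k (finSumFinEquiv (Sum.inl a))) = col a := by
    intro a
    funext k
    have ha : ((finSumFinEquiv (Sum.inl a) : Fin (m + 2)) : ℕ) = (a : ℕ) := by
      simp [finSumFinEquiv_apply_left]
    simp only [hZ', ha, a.isLt, dif_pos]
    rfl
  have hZ'R : ∀ b : Fin 2,
      (fun k => Z' k (finSumFinEquiv (Sum.inr b))) = (fun k => Zperp k b) := by
    intro b
    funext k
    have hb : ((finSumFinEquiv (Sum.inr b) : Fin (m + 2)) : ℕ) = m + (b : ℕ) := by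
      simp [finSumFinEquiv_apply_right]
    fin_cases b <;>
      simp [hZ', hZperp, hb]
  -- inner product values
  have dS_col : ∀ a b : Fin m,
      star (col a) ⬝ᵥ (S *ᵥ col b) = if a = b then 1 else 0 := by
    intro a b
    rw [show col a = fun k => U k (Fin.castLE hm a) from rfl, aux_dot_row, gS_col b,
      Pi.single_apply]
    by_cases hab : a = b
    · simp [hab]
    · have : ¬ Fin.castLE hm a = Fin.castLE hm b := by
        intro hcc
        exact hab (by
          have := congrArg (fun x : Fin n => (x : ℕ)) hcc
          exact Fin.ext this)
      simp [hab, this]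
  have dS_u : ∀ a : Fin m, star (col a) ⬝ᵥ (S *ᵥ u) = 0 := by
    intro a
    rw [show col a = fun k => U k (Fin.castLE hm a) from rfl, aux_dot_row]
    exact huorth (Fin.castLE hm a) a.isLt
  have dS_pp : ∀ a : Fin m, star (col a) ⬝ᵥ (S *ᵥ pperp) = 0 := by
    intro a
    rw [show col a = fun k => U k (Fin.castLE hm a) from rfl, aux_dot_row, gS_pperp]
    simp [a.isLt]
  have hΛH : Λᴴ = Matrix.diagonal fun k => (lam k : ℂ) := by
    rw [hΛ, diagonal_conjTranspose,
      show (star fun k : Fin n => ((lam k : ℂ))) = fun k : Fin n => ((lam k : ℂ)) from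
        funext fun k => by rw [Pi.star_apply]; exact Complex.conj_ofReal (lam k)]
  have dH_col : ∀ a b : Fin m,
      star (col a) ⬝ᵥ (H *ᵥ col b) = if a = b then (lam (Fin.castLE hm a) : ℂ) else 0 := by
    intro a b
    rw [show col a = fun k => U k (Fin.castLE hm a) from rfl, aux_dot_row, hUHv, gS_col b,
      hΛH, mulVec_diagonal, Pi.single_apply]
    by_cases hab : a = b
    · simp [hab]
    · have : ¬ Fin.castLE hm a = Fin.castLE hm b := by
        intro hcc
        exact hab (Fin.ext (congrArg (fun x : Fin n => (x : ℕ)) hcc))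
      simp [hab, this]
  have dH_u : ∀ a : Fin m, star (col a) ⬝ᵥ (H *ᵥ u) = 0 := by
    intro a
    rw [show col a = fun k => U k (Fin.castLE hm a) from rfl, aux_dot_row, hUHv, hΛH,
      mulVec_diagonal, huorth (Fin.castLE hm a) a.isLt, mul_zero]
  have dH_pp : ∀ a : Fin m, star (col a) ⬝ᵥ (H *ᵥ pperp) = 0 := by
    intro a
    rw [show col a = fun k => U k (Fin.castLE hm a) from rfl, aux_dot_row, hUHv, hΛH,
      mulVec_diagonal, gS_pperp]
    simp [a.isLt]
  have hZpx : ∀ b : Fin 2, (fun k => Zperp k b) = (if (b : ℕ) = 0 then u else pperp) := by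
    intro b; funext k; by_cases hb : (b : ℕ) = 0
    · simp [hZperp, hb, (Fin.ext hb : b = 0)]
    · have hb' : b ≠ 0 := fun h => hb (by simp [h])
      simp [hZperp, hb, hb']
  -- block identities
  have hblockH : Z'ᴴ * H * Z' =
      (Matrix.reindex finSumFinEquiv finSumFinEquiv) (Matrix.fromBlocks Λm 0 0 Hperp) := by
    rw [← Equiv.symm_apply_eq, Matrix.reindex_symm]
    ext i j
    rcases i with a | a <;> rcases j with b | b <;>
      simp only [Matrix.reindex_apply, Matrix.submatrix_apply, Equiv.symm_symm,
        Matrix.fromBlocks_apply₁₁, Matrix.fromBlocks_apply₁₂, Matrix.fromBlocks_apply₂₁,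
        Matrix.fromBlocks_apply₂₂]
    · rw [aux_entry, hZ'L a, hZ'L b, dH_col a b, hΛm, Matrix.diagonal_apply]
    · rw [aux_entry, hZ'L a, hZ'R b, hZpx b]
      fin_cases b <;> simp [dH_u a, dH_pp a]
    · rw [aux_entry, hZ'R a, hZ'L b, aux_herm_dot hHsymm, hZpx a]
      fin_cases a <;> simp [dH_u b, dH_pp b]
    · rw [aux_entry, hZ'R a, hZ'R b, hHperp, aux_entry]
  have hblockS : Z'ᴴ * S * Z' =
      (Matrix.reindex finSumFinEquiv finSumFinEquiv)
        (Matrix.fromBlocks (1 : Matrix (Fin m) (Fin m) ℂ) 0 0 Sperp) := by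
    rw [← Equiv.symm_apply_eq, Matrix.reindex_symm]
    ext i j
    rcases i with a | a <;> rcases j with b | b <;>
      simp only [Matrix.reindex_apply, Matrix.submatrix_apply, Equiv.symm_symm,
        Matrix.fromBlocks_apply₁₁, Matrix.fromBlocks_apply₁₂, Matrix.fromBlocks_apply₂₁,
        Matrix.fromBlocks_apply₂₂]
    · rw [aux_entry, hZ'L a, hZ'L b, dS_col a b, Matrix.one_apply]
    · rw [aux_entry, hZ'L a, hZ'R b, hZpx b]
      fin_cases b <;> simp [dS_u a, dS_pp a]
    · rw [aux_entry, hZ'R a, hZ'L b, aux_herm_dot hSsymm, hZpx a]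
      fin_cases a <;> simp [dS_u b, dS_pp b]
    · rw [aux_entry, hZ'R a, hZ'R b, hSperp, aux_entry]
  have hkeyH : L * (Zᴴ * H * Z) * Lᴴ =
      (Matrix.reindex finSumFinEquiv finSumFinEquiv) (Matrix.fromBlocks Λm 0 0 Hperp) := by
    rw [key H, hblockH]
  have hkeyS : L * (Zᴴ * S * Z) * Lᴴ =
      (Matrix.reindex finSumFinEquiv finSumFinEquiv)
        (Matrix.fromBlocks (1 : Matrix (Fin m) (Fin m) ℂ) 0 0 Sperp) := by
    rw [key S, hblockS]
  refine ⟨⟨L, hLlow, hLdiag, hkeyH, hkeyS⟩, ?_⟩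
  -- determinant part
  have hdetL : L.det = 1 := by
    rw [Matrix.det_of_lowerTriangular L (fun i j hij => hLlow i j hij)]
    simp [hLdiag]
  have hdetLH : Lᴴ.det = 1 := by
    rw [Matrix.det_conjTranspose, hdetL, star_one]
  intro μ
  have hmix : L * (Zᴴ * H * Z - μ • (Zᴴ * S * Z)) * Lᴴ =
      (Matrix.reindex finSumFinEquiv finSumFinEquiv)
        (Matrix.fromBlocks (Λm - μ • (1 : Matrix (Fin m) (Fin m) ℂ)) 0 0
          (Hperp - μ • Sperp)) := by
    rw [Matrix.mul_sub, Matrix.sub_mul, Matrix.mul_smul, Matrix.smul_mul, hkeyH, hkeyS]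
    have h2 : ∀ X Y : Matrix (Fin m ⊕ Fin 2) (Fin m ⊕ Fin 2) ℂ,
        (Matrix.reindex finSumFinEquiv finSumFinEquiv) X -
          μ • (Matrix.reindex finSumFinEquiv finSumFinEquiv) Y =
        (Matrix.reindex finSumFinEquiv finSumFinEquiv) (X - μ • Y) := by
      intro X Y; ext i j; simp [Matrix.reindex_apply]
    rw [h2]
    congr 1
    ext i j
    rcases i with a | a <;> rcases j with b | b <;>
      simp [Matrix.fromBlocks_apply₁₁,
        Matrix.fromBlocks_apply₁₂, Matrix.fromBlocks_apply₂₁, Matrix.fromBlocks_apply₂₂]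
  have h1 : (Zᴴ * H * Z - μ • (Zᴴ * S * Z)).det =
      (L * (Zᴴ * H * Z - μ • (Zᴴ * S * Z)) * Lᴴ).det := by
    rw [Matrix.det_mul, Matrix.det_mul, hdetL, hdetLH, one_mul, mul_one]
  rw [h1, hmix, Matrix.det_reindex_self, Matrix.det_fromBlocks_zero₂₁]
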